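/- Let q : W × W → [0,∞) be an irreducible kernel on a finite set W admitting a positive reversible measure λ, i.e. λ_i q(i,j) = λ_j q(j,i) for all i,j. A family (ρ_i)_{i∈W} with values in [0,1] satisfies ρ_i(1-ρ_j)q(i,j) = ρ_j(1-ρ_i)q(j,i) for all i,j ∈ W if and only if either ρ_i = 1 for all i ∈ W, or there exists c ≥ 0 such that ρ_i = cλ_i/(1+cλ_i) for all i ∈ W. -/

import Mathlib

theorem detailed_balance_characterization
    {W : Type*} [Fintype W] (q : W → W → ℝ) (hq : ∀ i j, 0 ≤ q i j)
    (hirr : ∀ i j : W, Relation.ReflTransGen (fun a b => 0 < q a b) i j)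
    (lam : W → ℝ) (hlam : ∀ i, 0 < lam i)
    (hrev : ∀ i j, lam i * q i j = lam j * q j i)
    (ρ : W → ℝ) (hρ : ∀ i, ρ i ∈ Set.Icc (0:ℝ) 1) :
    (∀ i j, ρ i * (1 - ρ j) * q i j = ρ j * (1 - ρ i) * q j i) ↔
      ((∀ i, ρ i = 1) ∨
        ∃ c : ℝ, 0 ≤ c ∧ ∀ i, ρ i = c * lam i / (1 + c * lam i)) := by
  constructor
  · intro hdb
    by_cases hall : ∀ i, ρ i = 1
    · exact Or.inl hall
    · right
      push_neg at hall
      obtain ⟨i0, hi0⟩ := hall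
      have hi0lt : ρ i0 < 1 := lt_of_le_of_ne (hρ i0).2 hi0
      set c : ℝ := ρ i0 / ((1 - ρ i0) * lam i0) with hc
      have hcpos : 0 ≤ c := by
        apply div_nonneg (hρ i0).1
        exact le_of_lt (mul_pos (by linarith) (hlam i0))
      refine ⟨c, hcpos, fun j => ?_⟩
      -- edge lemma
      have step : ∀ a b : W, 0 < q a b → ρ a < 1 →
          ρ b < 1 ∧ ρ a * (1 - ρ b) * lam b = ρ b * (1 - ρ a) * lam a := by
        intro a b hab ha
        have hdb' := hdb a b
        have hr := hrev a b
        have hqba : 0 < q b a := by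
          nlinarith [hq b a, hlam b, mul_pos (hlam a) hab]
        have hblt : ρ b < 1 := by
          rcases lt_or_eq_of_le (hρ b).2 with h | h
          · exact h
          · exfalso
            rw [h] at hdb'
            nlinarith [hdb', mul_pos hqba (show (0:ℝ) < 1 - ρ a by linarith)]
        refine ⟨hblt, ?_⟩
        have key2 : ρ a * (1 - ρ b) * lam b * q a b
            = ρ b * (1 - ρ a) * lam a * q a b := by
          linear_combination lam b * hdb' - ρ b * (1 - ρ a) * hr
        exact mul_right_cancel₀ (ne_of_gt hab) key2
      -- propagate along paths
      have prop : ∀ j, ρ j < 1 ∧ ρ j / ((1 - ρ j) * lam j) = c := by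
        intro j
        have hpath := hirr i0 j
        induction hpath with
        | refl => exact ⟨hi0lt, rfl⟩
        | tail hab hbc ih =>
          rename_i x y
          obtain ⟨hblt, hbeq⟩ := ih
          obtain ⟨hclt, hkey⟩ := step x y hbc hblt
          refine ⟨hclt, ?_⟩
          have hy : (0:ℝ) < (1 - ρ y) * lam y := mul_pos (by linarith) (hlam y)
          have hx : (0:ℝ) < (1 - ρ x) * lam x := mul_pos (by linarith) (hlam x)
          rw [← hbeq, div_eq_div_iff hy.ne' hx.ne']
          linear_combination -hkey
      obtain ⟨hjlt, hjeq⟩ := prop j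
      have hd : ((1 - ρ j) * lam j) ≠ 0 :=
        ne_of_gt (mul_pos (by linarith) (hlam j))
      have h1 : ρ j = c * ((1 - ρ j) * lam j) := by
        rw [div_eq_iff hd] at hjeq
        linarith [hjeq]
      have hden : 0 < 1 + c * lam j := by nlinarith [mul_nonneg hcpos (hlam j).le]
      rw [eq_div_iff (ne_of_gt hden)]
      linear_combination h1
  · rintro (h1 | ⟨c, hc, hrho⟩) i j
    · rw [h1 i, h1 j]; ring
    · have hi : (0:ℝ) < 1 + c * lam i := by nlinarith [mul_nonneg hc (hlam i).le]
      have hj : (0:ℝ) < 1 + c * lam j := by nlinarith [mul_nonneg hc (hlam j).le]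
      rw [hrho i, hrho j]
      have hij := hrev i j
      field_simp
      linear_combination c * hij
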